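/- Let 0 < k < n and let M = (E, ρ) be a matroid that has no minor isomorphic to the uniform matroid U_n^k. Then for every pair of cyclic flats X ⊊ Y of M with no cyclic flat strictly between them (a covering pair in the lattice of cyclic flats), either ρ(Y) − ρ(X) < k or η(Y) − η(X) < n − k, where η(A) = |A| − ρ(A). -/

import Mathlib

open Finset

structure FinMatroid (α : Type*) [DecidableEq α] where
  E : Finset α
  rk : Finset α → ℕ
  rk_le_card : ∀ A, A ⊆ E → rk A ≤ A.card
  rk_mono : ∀ A B, A ⊆ B → B ⊆ E → rk A ≤ rk B
  rk_submod : ∀ A B, A ⊆ E → B ⊆ E → rk (A ∪ B) + rk (A ∩ B) ≤ rk A + rk B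

namespace FinMatroid

variable {α : Type*} [DecidableEq α]

/-- The closure operator `cl(A) = {e ∈ E : ρ(A ∪ {e}) = ρ(A)}`. -/
def cl (M : FinMatroid α) (A : Finset α) : Finset α :=
  M.E.filter fun e => M.rk (insert e A) = M.rk A

/-- The cyclic operator `cyc(A) = {e ∈ A : ρ(A − {e}) = ρ(A)}`. -/
def cyc (M : FinMatroid α) (A : Finset α) : Finset α :=
  A.filter fun e => M.rk (A.erase e) = M.rk A

/-- A flat is a set fixed by the closure operator. -/
def IsFlat (M : FinMatroid α) (F : Finset α) : Prop :=
  F ⊆ M.E ∧ M.cl F = F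

/-- A cyclic set is a set fixed by the cyclic operator. -/
def IsCyclic (M : FinMatroid α) (U : Finset α) : Prop :=
  U ⊆ M.E ∧ M.cyc U = U

/-- A cyclic flat is a set fixed by both the closure and the cyclic operators. -/
def IsCyclicFlat (M : FinMatroid α) (Z : Finset α) : Prop :=
  Z ⊆ M.E ∧ M.cl Z = Z ∧ M.cyc Z = Z

/-- The minor `M|Y/X`: restriction to `Y` followed by contraction of `X`. -/
def minor (M : FinMatroid α) (X Y : Finset α) (hXY : X ⊆ Y) (hY : Y ⊆ M.E) :
    FinMatroid α where
  E := Y \ X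
  rk A := M.rk (A ∪ X) - M.rk X
  rk_le_card := by
    intro A hA
    have hAE : A ⊆ M.E := fun a ha => hY (mem_sdiff.mp (hA ha)).1
    have hXE : X ⊆ M.E := hXY.trans hY
    have h1 := M.rk_submod A X hAE hXE
    have h2 := M.rk_le_card A hAE
    show M.rk (A ∪ X) - M.rk X ≤ A.card
    omega
  rk_mono := by
    intro A B hAB hB
    have hBE : B ⊆ M.E := fun a ha => hY (mem_sdiff.mp (hB ha)).1
    have hBX : B ∪ X ⊆ M.E := union_subset hBE (hXY.trans hY)
    have := M.rk_mono (A ∪ X) (B ∪ X) (union_subset_union hAB Subset.rfl) hBX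
    show M.rk (A ∪ X) - M.rk X ≤ M.rk (B ∪ X) - M.rk X
    omega
  rk_submod := by
    intro A B hA hB
    have hAE : A ⊆ M.E := fun a ha => hY (mem_sdiff.mp (hA ha)).1
    have hBE : B ⊆ M.E := fun a ha => hY (mem_sdiff.mp (hB ha)).1
    have hXE : X ⊆ M.E := hXY.trans hY
    have hAX : A ∪ X ⊆ M.E := union_subset hAE hXE
    have hBX : B ∪ X ⊆ M.E := union_subset hBE hXE
    have hsub := M.rk_submod (A ∪ X) (B ∪ X) hAX hBX
    have e1 : (A ∪ X) ∪ (B ∪ X) = (A ∪ B) ∪ X := by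
      ext x; simp only [mem_union]; tauto
    have e2 : (A ∪ X) ∩ (B ∪ X) = (A ∩ B) ∪ X := by
      ext x; simp only [mem_union, mem_inter]; tauto
    rw [e1, e2] at hsub
    have h1 : M.rk X ≤ M.rk (A ∪ X) := M.rk_mono X _ subset_union_right hAX
    have h2 : M.rk X ≤ M.rk (B ∪ X) := M.rk_mono X _ subset_union_right hBX
    have hIX : (A ∩ B) ∪ X ⊆ M.E := union_subset (inter_subset_left.trans hAE) hXE
    have hUX : (A ∪ B) ∪ X ⊆ M.E := union_subset (union_subset hAE hBE) hXE
    have h3 : M.rk X ≤ M.rk ((A ∩ B) ∪ X) := M.rk_mono X _ subset_union_right hIX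
    have h4 : M.rk X ≤ M.rk ((A ∪ B) ∪ X) := M.rk_mono X _ subset_union_right hUX
    show M.rk ((A ∪ B) ∪ X) - M.rk X + (M.rk ((A ∩ B) ∪ X) - M.rk X) ≤
      (M.rk (A ∪ X) - M.rk X) + (M.rk (B ∪ X) - M.rk X)
    omega

/-- The restriction `M|Y`. -/
def restrict (M : FinMatroid α) (Y : Finset α) (hY : Y ⊆ M.E) : FinMatroid α where
  E := Y
  rk := M.rk
  rk_le_card := fun A hA => M.rk_le_card A (hA.trans hY)
  rk_mono := fun A B hAB hB => M.rk_mono A B hAB (hB.trans hY)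
  rk_submod := fun A B hA hB => M.rk_submod A B (hA.trans hY) (hB.trans hY)

/-- `M` is binary: it is the matroid of linear dependence of a family of
vectors over the field with two elements. -/
def IsBinary (M : FinMatroid α) : Prop :=
  ∃ (m : ℕ) (φ : α → (Fin m → ZMod 2)),
    ∀ A : Finset α, A ⊆ M.E →
      M.rk A = Module.finrank (ZMod 2) (Submodule.span (ZMod 2) (φ '' (A : Set α)))

def Simple (M : FinMatroid α) : Prop :=
  (∀ e ∈ M.E, M.rk {e} = 1) ∧
    ∀ e ∈ M.E, ∀ f ∈ M.E, e ≠ f → M.rk ({e, f} : Finset α) = 2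

def NoIsthmus (M : FinMatroid α) : Prop :=
  ∀ e ∈ M.E, M.rk (M.E.erase e) = M.rk M.E

def IsMinDist (M : FinMatroid α) (d : ℕ) : Prop :=
  (∃ X ⊆ M.E, M.rk (M.E \ X) < M.rk M.E ∧ X.card = d) ∧
    ∀ X ⊆ M.E, M.rk (M.E \ X) < M.rk M.E → d ≤ X.card

def IsAtomCF (M : FinMatroid α) (Z : Finset α) : Prop :=
  M.IsCyclicFlat Z ∧ Z ≠ ∅ ∧ ¬ ∃ Z', M.IsCyclicFlat Z' ∧ ∅ ⊂ Z' ∧ Z' ⊂ Z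

def IsCoatomCF (M : FinMatroid α) (Z : Finset α) : Prop :=
  M.IsCyclicFlat Z ∧ Z ⊂ M.E ∧ ¬ ∃ Z', M.IsCyclicFlat Z' ∧ Z ⊂ Z' ∧ Z' ⊂ M.E

def IsCircuit (M : FinMatroid α) (C : Finset α) : Prop :=
  C ⊆ M.E ∧ M.rk C < C.card ∧ ∀ D ⊂ C, M.rk D = D.card

/-! ### Auxiliary lemmas -/

section Aux

variable {α : Type*} [DecidableEq α] (M : FinMatroid α)

lemma aux_rk_union_eq_of_forall (A B : Finset α) (hA : A ⊆ M.E) (hB : B ⊆ M.E)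
    (h : ∀ e ∈ B, M.rk (insert e A) = M.rk A) : M.rk (A ∪ B) = M.rk A := by
  classical
  induction B using Finset.induction_on with
  | empty => rw [union_empty]
  | insert b B' hb ih =>
    have hB' : B' ⊆ M.E := (subset_insert b B').trans hB
    have hIH : M.rk (A ∪ B') = M.rk A := ih hB' (fun e he => h e (mem_insert_of_mem he))
    have hbE : b ∈ M.E := hB (mem_insert_self b B')
    have h1 : insert b A ⊆ M.E := insert_subset hbE hA
    have h2 : A ∪ B' ⊆ M.E := union_subset hA hB'
    have hsub := M.rk_submod (insert b A) (A ∪ B') h1 h2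
    have he1 : insert b A ∪ (A ∪ B') = A ∪ insert b B' := by
      ext x; simp only [mem_union, mem_insert]; tauto
    have he2 : A ⊆ insert b A ∩ (A ∪ B') := by
      intro x hx; simp only [mem_inter, mem_union, mem_insert]; tauto
    have h3 : M.rk A ≤ M.rk (insert b A ∩ (A ∪ B')) :=
      M.rk_mono _ _ he2 (inter_subset_left.trans h1)
    have h4 : M.rk A ≤ M.rk (A ∪ insert b B') :=
      M.rk_mono _ _ subset_union_left (union_subset hA ((insert_subset hbE hB')))
    rw [he1] at hsub
    have h5 : M.rk (insert b A) = M.rk A := h b (mem_insert_self b B')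
    omega

lemma aux_mem_cl {A : Finset α} {e : α} :
    e ∈ M.cl A ↔ e ∈ M.E ∧ M.rk (insert e A) = M.rk A := by
  unfold FinMatroid.cl; exact mem_filter

lemma aux_cl_subset_E (A : Finset α) : M.cl A ⊆ M.E := filter_subset _ _

lemma aux_subset_cl (A : Finset α) (hA : A ⊆ M.E) : A ⊆ M.cl A := by
  intro e he
  simp only [FinMatroid.cl, mem_filter]
  exact ⟨hA he, by rw [insert_eq_self.mpr he]⟩

lemma aux_rk_cl (A : Finset α) (hA : A ⊆ M.E) : M.rk (M.cl A) = M.rk A := by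
  have h1 : A ∪ M.cl A = M.cl A := union_eq_right.mpr (aux_subset_cl M A hA)
  rw [← h1]
  exact aux_rk_union_eq_of_forall M A (M.cl A) hA (aux_cl_subset_E M A)
    (fun e he => (mem_filter.mp he).2)

lemma aux_cl_cl (A : Finset α) (hA : A ⊆ M.E) : M.cl (M.cl A) = M.cl A := by
  ext e
  rw [aux_mem_cl, aux_mem_cl]
  constructor
  · rintro ⟨heE, hrk⟩
    refine ⟨heE, ?_⟩
    have h1 : M.rk A ≤ M.rk (insert e A) :=
      M.rk_mono _ _ (subset_insert e A) (insert_subset heE hA)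
    have h2 : M.rk (insert e A) ≤ M.rk (insert e (M.cl A)) :=
      M.rk_mono _ _ (insert_subset_insert _ (aux_subset_cl M A hA))
        (insert_subset heE (aux_cl_subset_E M A))
    have h3 : M.rk (M.cl A) = M.rk A := aux_rk_cl M A hA
    omega
  · rintro ⟨heE, hrk⟩
    have hecl : e ∈ M.cl A := aux_mem_cl M |>.mpr ⟨heE, hrk⟩
    exact ⟨heE, by rw [insert_eq_self.mpr hecl]⟩

lemma aux_cl_mono (A B : Finset α) (hAB : A ⊆ B) (hB : B ⊆ M.E) : M.cl A ⊆ M.cl B := by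
  intro e he
  obtain ⟨heE, hrk⟩ := mem_filter.mp he
  have hA : A ⊆ M.E := hAB.trans hB
  have h1 : insert e A ⊆ M.E := insert_subset heE hA
  have hsub := M.rk_submod (insert e A) B h1 hB
  have he1 : insert e A ∪ B = insert e B := by
    ext x; simp only [mem_union, mem_insert]; tauto
  have he2 : A ⊆ insert e A ∩ B := by
    intro x hx; simp only [mem_inter, mem_insert]; exact ⟨Or.inr hx, hAB hx⟩
  have h3 : M.rk A ≤ M.rk (insert e A ∩ B) :=
    M.rk_mono _ _ he2 (inter_subset_left.trans h1)
  have h4 : M.rk B ≤ M.rk (insert e B) :=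
    M.rk_mono _ _ (subset_insert e B) (insert_subset heE hB)
  rw [he1] at hsub
  exact mem_filter.mpr ⟨heE, by omega⟩

end Aux

end FinMatroid


/-- If `0 < k < n` and `M` has no minor isomorphic to the uniform
matroid `U_n^k`, then for every covering pair `X ⊊ Y` in the lattice of cyclic flats,
either `ρ(Y) − ρ(X) < k` or `η(Y) − η(X) < n − k`. -/
theorem covering_edge_bound {α : Type*} [DecidableEq α] (M : FinMatroid α) (n k : ℕ)
    (hk : 0 < k) (hkn : k < n)
    (hminor : ¬ ∃ X Y : Finset α, X ⊆ Y ∧ Y ⊆ M.E ∧ (Y \ X).card = n ∧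
      ∀ A ⊆ Y \ X, M.rk (A ∪ X) - M.rk X = min A.card k)
    (X Y : Finset α) (hX : M.IsCyclicFlat X) (hY : M.IsCyclicFlat Y) (hXY : X ⊂ Y)
    (hcov : ¬ ∃ Z, M.IsCyclicFlat Z ∧ X ⊂ Z ∧ Z ⊂ Y) :
    M.rk Y - M.rk X < k ∨ (Y.card - M.rk Y) - (X.card - M.rk X) < n - k := by
  by_contra hcon
  push_neg at hcon
  obtain ⟨h1, h2⟩ := hcon
  obtain ⟨hXE, hXflat, hXcyc⟩ := hX
  obtain ⟨hYE, hYflat, hYcyc⟩ := hY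
  have hXsubY : X ⊆ Y := hXY.subset
  set S : Finset α := Y \ X with hSdef
  have hSE : S ⊆ M.E := sdiff_subset.trans hYE
  have hSX : ∀ e ∈ S, e ∉ X := fun e he => (mem_sdiff.mp he).2
  have hSY : S ⊆ Y := sdiff_subset
  have hrkmono : M.rk X ≤ M.rk Y := M.rk_mono X Y hXsubY hYE
  set r := M.rk Y - M.rk X with hrdef
  have hrY : M.rk Y = M.rk X + r := by omega
  have hkr : k ≤ r := by omega
  -- basic bounds for subsets of S
  have hlb : ∀ B ⊆ S, M.rk X ≤ M.rk (B ∪ X) := by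
    intro B hBS
    exact M.rk_mono X (B ∪ X) subset_union_right (union_subset (hBS.trans hSE) hXE)
  have hub1 : ∀ B ⊆ S, M.rk (B ∪ X) ≤ M.rk X + B.card := by
    intro B hBS
    have hBE : B ⊆ M.E := hBS.trans hSE
    have hs := M.rk_submod B X hBE hXE
    have hc := M.rk_le_card B hBE
    omega
  have hub2 : ∀ B ⊆ S, M.rk (B ∪ X) ≤ M.rk X + r := by
    intro B hBS
    have : B ∪ X ⊆ Y := union_subset ((hBS.trans hSY)) hXsubY
    have := M.rk_mono (B ∪ X) Y this hYE
    omega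
  -- KEY STEP: the minor M|Y/X is uniform
  have huniform : ∀ B ⊆ S, M.rk (B ∪ X) = M.rk X + min B.card r := by
    by_contra huni
    push_neg at huni
    obtain ⟨A, hAS, hAne⟩ := huni
    have hAlt : M.rk (A ∪ X) < M.rk X + min A.card r := by
      have := hub1 A hAS
      have := hub2 A hAS
      have := hlb A hAS
      omega
    -- minimal dependent set C in the minor
    classical
    set D : Finset (Finset α) :=
      S.powerset.filter (fun B => M.rk (B ∪ X) < M.rk X + B.card) with hDdef
    have hAD : A ∈ D := by
      rw [hDdef, mem_filter, mem_powerset]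
      exact ⟨hAS, by omega⟩
    obtain ⟨C, hCD, hCmin⟩ := Finset.exists_min_image D Finset.card ⟨A, hAD⟩
    rw [hDdef, mem_filter, mem_powerset] at hCD
    obtain ⟨hCS, hCdep⟩ := hCD
    have hmin' : ∀ B ⊆ S, B.card < C.card → M.rk (B ∪ X) = M.rk X + B.card := by
      intro B hBS hBcard
      have hBnotD : ¬ (M.rk (B ∪ X) < M.rk X + B.card) := by
        intro hbad
        have : B ∈ D := by rw [hDdef, mem_filter, mem_powerset]; exact ⟨hBS, hbad⟩
        have := hCmin B this
        omega
      have := hub1 B hBS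
      omega
    have hCpos : 0 < C.card := by
      rcases Nat.eq_zero_or_pos C.card with h | h
      · exfalso
        rw [card_eq_zero] at h
        rw [h, empty_union] at hCdep
        simp at hCdep
      · exact h
    -- rank of C in the minor is |C| - 1, and erasing any element keeps rank
    have hCr1 : ∀ e ∈ C, M.rk (C.erase e ∪ X) = M.rk X + (C.card - 1) := by
      intro e he
      have h := hmin' (C.erase e) ((erase_subset e C).trans hCS)
        (by rw [card_erase_of_mem he]; omega)
      rw [card_erase_of_mem he] at h
      exact h
    have hCrank : M.rk (C ∪ X) = M.rk X + (C.card - 1) := by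
      obtain ⟨e, he⟩ := card_pos.mp hCpos
      have h := hCr1 e he
      have hmon : M.rk (C.erase e ∪ X) ≤ M.rk (C ∪ X) :=
        M.rk_mono _ _ (union_subset_union (erase_subset e C) Subset.rfl)
          (union_subset (hCS.trans hSE) hXE)
      omega
    -- |C| ≤ r
    have hCler : C.card ≤ r := by
      by_contra hgt
      push_neg at hgt
      rcases le_or_gt A.card r with hAr | hAr
      · have := hmin' A hAS (by omega)
        omega
      · obtain ⟨B, hBA, hBcard⟩ := A.exists_subset_card_eq (le_of_lt hAr)
        have hBr : M.rk (B ∪ X) = M.rk X + r := by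
          rw [← hBcard]
          exact hmin' B (hBA.trans hAS) (by omega)
        have : M.rk (B ∪ X) ≤ M.rk (A ∪ X) :=
          M.rk_mono _ _ (union_subset_union hBA Subset.rfl)
            (union_subset (hAS.trans hSE) hXE)
        omega
    -- W := cl(C ∪ X) is a cyclic flat strictly between X and Y
    have hCXE : C ∪ X ⊆ M.E := union_subset (hCS.trans hSE) hXE
    set W := M.cl (C ∪ X) with hWdef
    have hWE : W ⊆ M.E := FinMatroid.aux_cl_subset_E M _
    have hCXW : C ∪ X ⊆ W := FinMatroid.aux_subset_cl M _ hCXE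
    have hrkW : M.rk W = M.rk X + (C.card - 1) := by
      rw [hWdef, FinMatroid.aux_rk_cl M _ hCXE]; exact hCrank
    have hWflat : M.cl W = W := FinMatroid.aux_cl_cl M _ hCXE
    have hWY : W ⊆ Y := by
      have : M.cl (C ∪ X) ⊆ M.cl Y :=
        FinMatroid.aux_cl_mono M _ Y (union_subset (hCS.trans hSY) hXsubY) hYE
      rwa [hYflat] at this
    have hXW : X ⊂ W := by
      rw [Finset.ssubset_iff_of_subset (subset_union_right.trans hCXW)]
      obtain ⟨e, he⟩ := card_pos.mp hCpos
      exact ⟨e, hCXW (mem_union_left X he), hSX e (hCS he)⟩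
    have hWYs : W ⊂ Y := by
      rw [Finset.ssubset_iff_subset_ne]
      refine ⟨hWY, ?_⟩
      intro heq
      rw [heq] at hrkW
      omega
    have hWcyc : M.cyc W = W := by
      unfold FinMatroid.cyc
      rw [Finset.filter_eq_self]
      intro e heW
      have hWeE : W.erase e ⊆ M.E := (erase_subset e W).trans hWE
      have hmon : M.rk (W.erase e) ≤ M.rk W := M.rk_mono _ _ (erase_subset e W) hWE
      by_cases heC : e ∈ C
      · -- use minimality: erase e from C keeps rank
        have h := hCr1 e heC
        have hsub : C.erase e ∪ X ⊆ W.erase e := by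
          intro x hx
          rw [mem_union] at hx
          rcases hx with hx | hx
          · exact mem_erase.mpr ⟨(mem_erase.mp hx).1,
              hCXW (mem_union_left X ((erase_subset e C) hx))⟩
          · exact mem_erase.mpr ⟨fun hxe => hSX e (hCS heC) (hxe ▸ hx),
              hCXW (mem_union_right C hx)⟩
        have := M.rk_mono _ _ hsub hWeE
        omega
      · by_cases heX : e ∈ X
        · -- use that X is cyclic
          have heXcyc : M.rk (X.erase e) = M.rk X := by
            have : e ∈ M.cyc X := by rw [hXcyc]; exact heX
            unfold FinMatroid.cyc at this
            exact (mem_filter.mp this).2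
          have hsub := M.rk_submod X (W.erase e) hXE hWeE
          have he1 : X ∪ W.erase e = W := by
            ext x
            simp only [mem_union, mem_erase]
            constructor
            · rintro (hx | ⟨-, hx⟩)
              · exact hCXW (mem_union_right C hx)
              · exact hx
            · intro hx
              by_cases hxe : x = e
              · exact Or.inl (hxe ▸ heX)
              · exact Or.inr ⟨hxe, hx⟩
          have he2 : X ∩ W.erase e = X.erase e := by
            ext x
            simp only [mem_inter, mem_erase]
            constructor
            · rintro ⟨hx, hxe, -⟩; exact ⟨hxe, hx⟩
            · rintro ⟨hxe, hx⟩
              exact ⟨hx, hxe, hCXW (mem_union_right C hx)⟩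
          rw [he1, he2, heXcyc] at hsub
          omega
        · -- e ∉ C ∪ X : erasing e keeps C ∪ X inside
          have hsub : C ∪ X ⊆ W.erase e := by
            intro x hx
            refine mem_erase.mpr ⟨?_, hCXW hx⟩
            rintro rfl
            rw [mem_union] at hx
            tauto
          have := M.rk_mono _ _ hsub hWeE
          omega
    exact hcov ⟨W, ⟨hWE, hWflat, hWcyc⟩, hXW, hWYs⟩
  -- Now build the U_{k,n}-minor witness and contradict hminor
  have hScard : S.card + X.card = Y.card := by
    rw [hSdef, card_sdiff_of_subset hXsubY]
    have := card_le_card hXsubY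
    omega
  have hrkXc := M.rk_le_card X hXE
  have hrkYc := M.rk_le_card Y hYE
  have hSrk : M.rk Y ≤ M.rk X + S.card := by
    have hSXY : S ∪ X = Y := by
      rw [hSdef]; exact sdiff_union_of_subset hXsubY
    have := hub1 S Subset.rfl
    rw [hSXY] at this
    exact this
  have hrm : r ≤ S.card := by omega
  have hmn : r + (n - k) ≤ S.card := by omega
  obtain ⟨I, hIS, hIcard⟩ := S.exists_subset_card_eq (n := r - k) (by omega)
  have hSIcard : n ≤ (S \ I).card := by
    rw [card_sdiff_of_subset hIS]
    omega
  obtain ⟨T, hTSI, hTcard⟩ := (S \ I).exists_subset_card_eq hSIcard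
  have hTS : T ⊆ S := hTSI.trans sdiff_subset
  have hTI : ∀ e ∈ T, e ∉ I := fun e he => (mem_sdiff.mp (hTSI he)).2
  apply hminor
  refine ⟨X ∪ I, X ∪ I ∪ T, subset_union_left, ?_, ?_, ?_⟩
  · exact union_subset (union_subset hXE (hIS.trans hSE)) (hTS.trans hSE)
  · have hdiff : (X ∪ I ∪ T) \ (X ∪ I) = T := by
      ext x
      simp only [mem_sdiff, mem_union]
      constructor
      · rintro ⟨hx | hx, hnx⟩
        · tauto
        · exact hx
      · intro hx
        refine ⟨Or.inr hx, ?_⟩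
        rintro (h | h)
        · exact hSX x (hTS hx) h
        · exact hTI x hx h
    rw [hdiff, hTcard]
  · intro A hA
    have hdiff : (X ∪ I ∪ T) \ (X ∪ I) = T := by
      ext x
      simp only [mem_sdiff, mem_union]
      constructor
      · rintro ⟨hx | hx, hnx⟩
        · tauto
        · exact hx
      · intro hx
        refine ⟨Or.inr hx, ?_⟩
        rintro (h | h)
        · exact hSX x (hTS hx) h
        · exact hTI x hx h
    rw [hdiff] at hA
    have hAT : A ⊆ T := hA
    have hAI : A ∪ I ⊆ S := union_subset (hAT.trans hTS) hIS
    have hAIcard : (A ∪ I).card = A.card + (r - k) := by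
      rw [card_union_of_disjoint, hIcard]
      rw [Finset.disjoint_left]
      exact fun x hx => hTI x (hAT hx)
    have h5 : M.rk (A ∪ I ∪ X) = M.rk X + min (A.card + (r - k)) r := by
      rw [← hAIcard]
      exact huniform (A ∪ I) hAI
    have h6 : M.rk (I ∪ X) = M.rk X + (r - k) := by
      have := huniform I hIS
      rw [hIcard] at this
      rw [this]
      congr 1
      omega
    have he1 : A ∪ (X ∪ I) = A ∪ I ∪ X := by
      ext x; simp only [mem_union]; tauto
    have he2 : X ∪ I = I ∪ X := union_comm X I
    rw [he1, he2, h5, h6]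
    have hAcard : A.card ≤ n := by
      have := card_le_card hAT
      omega
    omega
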